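/- arXiv:1806.06471 — 4 statements merged into one kernel-verified Lean document; each statement's English description precedes it below -/
import Mathlib

section
/- Let S be an essentially small triangulated category with metric {M_i}. Suppose B ∈ Mod-S is a homological object (i.e. Hom(−, B) restricts to a homological functor on S^op) lying in Fc(S), and A ∈ Mod-S is the colimit of Y(a_*) for a Cauchy sequence a_* in S. Choose j > 0 with Hom(Y(M_j), B) = 0, and choose n such that for all i ≥ n the triangles a_i → a_{i+1} → d_i have T^{-1} d_i and d_i in M_j. Then for any i ≥ n, every map Y(a_i) → B factors uniquely as Y(a_i) → A → B. -/
namespace Stmt2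

open CategoryTheory Category Limits Pretriangulated ZeroObject

open Opposite

universe v u

variable (S : Type u) [Category.{v} S] [Preadditive S] [HasZeroObject S]
  [HasShift S ℤ] [∀ n : ℤ, (CategoryTheory.shiftFunctor S n).Additive] [Pretriangulated S]

structure TriMetric where
  M : ℕ → Set S
  zero_mem : ∀ i, (0 : S) ∈ M i
  antitone : ∀ i, M (i + 1) ⊆ M i
  ext_closed : ∀ i, ∀ T ∈ (distTriang S), T.obj₁ ∈ M i → T.obj₃ ∈ M i → T.obj₂ ∈ M i

variable {S}

def CauchySeq (μ : TriMetric S) (E : ℕ ⥤ S) : Prop :=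
  ∀ i : ℕ, 0 < i → ∀ j : ℤ, ∃ N : ℕ, 0 < N ∧ ∀ m m' : ℕ, N ≤ m → ∀ (hmm : m < m'),
    ∀ (D : S) (g : E.obj m' ⟶ D) (h : D ⟶ (E.obj m)⟦(1 : ℤ)⟧),
      Triangle.mk (E.map (homOfLE hmm.le)) g h ∈ (distTriang S) → D⟦j⟧ ∈ μ.M i

/-- An object `B` of `Mod-S` is homological if `Hom(-, B)` restricts to a homological
functor on `Sᵒᵖ`, i.e. `B` sends distinguished triangles to exact sequences. -/
def IsHomological (B : Sᵒᵖ ⥤ AddCommGrpCat.{v}) : Prop :=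
  ∀ T ∈ (distTriang S), Function.Exact (B.map T.mor₂.op) (B.map T.mor₁.op)

section Aux
variable (B : Sᵒᵖ ⥤ AddCommGrpCat.{v})

theorem map_op_map_op {p q r : S} (α : p ⟶ q) (β : q ⟶ r) (y : B.obj (op r)) :
    B.map α.op (B.map β.op y) = B.map (α ≫ β).op y := by
  rw [op_comp, CategoryTheory.Functor.map_comp]; rfl

theorem map_op_id {r : S} (y : B.obj (op r)) : B.map (𝟙 r).op y = y := by
  rw [op_id, CategoryTheory.Functor.map_id]; rfl

variable (hB : IsHomological B)

include hB

theorem map_op_zero_zero (w : S) (y : B.obj (op (0 : S))) :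
    B.map ((0 : w ⟶ (0 : S))).op y = 0 := by
  have h2 := (hB _ (contractible_distinguished w)).apply_apply_eq_zero y
  have h3 : B.map (𝟙 w).op (B.map ((0 : w ⟶ (0:S))).op y) = 0 := h2
  rwa [map_op_map_op, id_comp] at h3

theorem map_op_zero (w x : S) (q : B.obj (op x)) :
    B.map ((0 : w ⟶ x)).op q = 0 := by
  have h : B.map ((0 : w ⟶ (0:S)) ≫ (0 : (0:S) ⟶ x)).op q = 0 := by
    rw [← map_op_map_op]
    exact map_op_zero_zero B hB w _
  simpa using h

theorem decomp (x : S) (q : B.obj (op (x ⊞ x))) :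
    q = B.map biprod.fst.op (B.map biprod.inl.op q)
      + B.map biprod.snd.op (B.map biprod.inr.op q) := by
  have hT : Function.Exact ⇑(B.map (biprod.snd : x ⊞ x ⟶ x).op)
      ⇑(B.map (biprod.inl : x ⟶ x ⊞ x).op) :=
    hB _ (binaryBiproductTriangle_distinguished x x)
  have h1 : B.map (biprod.inl : x ⟶ x ⊞ x).op
      (q - B.map biprod.fst.op (B.map biprod.inl.op q)) = 0 := by
    rw [map_sub, map_op_map_op, biprod.inl_fst, map_op_id, sub_self]
  obtain ⟨z, hz⟩ := (hT _).mp h1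
  have h2 : B.map (biprod.inr : x ⟶ x ⊞ x).op
      (q - B.map biprod.fst.op (B.map biprod.inl.op q)) = z := by
    rw [← hz, map_op_map_op, biprod.inr_snd, map_op_id]
  rw [map_sub, map_op_map_op, biprod.inr_fst, map_op_zero B hB, sub_zero] at h2
  rw [← h2] at hz
  rw [hz]
  abel

theorem map_op_add {w x : S} (t t' : w ⟶ x) (b : B.obj (op x)) :
    B.map (t + t').op b = B.map t.op b + B.map t'.op b := by
  have e1 : B.map (biprod.inl : x ⟶ x ⊞ x).op (B.map (biprod.desc (𝟙 x) (𝟙 x)).op b) = b := by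
    rw [map_op_map_op, biprod.inl_desc, map_op_id]
  have e2 : B.map (biprod.inr : x ⟶ x ⊞ x).op (B.map (biprod.desc (𝟙 x) (𝟙 x)).op b) = b := by
    rw [map_op_map_op, biprod.inr_desc, map_op_id]
  have h0 : B.map (t + t').op b
      = B.map (biprod.lift t t').op (B.map (biprod.desc (𝟙 x) (𝟙 x)).op b) := by
    rw [map_op_map_op]
    congr 2
    simp
  rw [h0]
  conv_lhs => rw [decomp B hB x (B.map (biprod.desc (𝟙 x) (𝟙 x)).op b)]
  rw [map_add, e1, e2, map_op_map_op, map_op_map_op, biprod.lift_fst, biprod.lift_snd]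

theorem ev_surjective (x : S) (b : B.obj (op x)) :
    ∃ g : preadditiveYoneda.obj x ⟶ B, g.app (op x) (𝟙 x) = b := by
  refine ⟨{ app := fun w => AddCommGrpCat.ofHom (AddMonoidHom.mk' (fun t : w.unop ⟶ x => B.map (t.op : op x ⟶ w) b) (fun t t' => map_op_add B hB t t' b)), naturality := ?_ }, ?_⟩
  · intro w w' h
    ext t
    show B.map ((h.unop ≫ t).op : op x ⟶ w') b = B.map h (B.map t.op b)
    rw [show ((h.unop ≫ t).op : op x ⟶ w') = @Quiver.Hom.op _ _ (unop w) x t ≫ h from rfl, CategoryTheory.Functor.map_comp]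
    rfl
  · show B.map ((𝟙 x).op) b = b
    exact map_op_id B b

omit hB in
theorem app_eq {x : S} (g : preadditiveYoneda.obj x ⟶ B) (w : Sᵒᵖ) (t : w.unop ⟶ x) :
    g.app w t = B.map t.op (g.app (op x) (𝟙 x)) := by
  have h2 := NatTrans.naturality_apply g (t.op : op x ⟶ w) (𝟙 x)
  rwa [show ((preadditiveYoneda.obj x).map (t.op : op x ⟶ w)) (𝟙 x) = t from comp_id t] at h2

omit hB in
theorem homext {x : S} (g g' : preadditiveYoneda.obj x ⟶ B)
    (h : g.app (op x) (𝟙 x) = g'.app (op x) (𝟙 x)) : g = g' := by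
  ext w t
  show g.app w t = g'.app w t
  rw [app_eq B g w t, app_eq B g' w t, h]

omit hB in
theorem ev_comp {x y : S} (u : x ⟶ y) (g : preadditiveYoneda.obj y ⟶ B) :
    (preadditiveYoneda.map u ≫ g).app (op x) (𝟙 x) = B.map u.op (g.app (op y) (𝟙 y)) := by
  rw [← app_eq B g (op x) u]
  have h : (preadditiveYoneda.map u ≫ g).app (op x) (𝟙 x)
      = g.app (op x) ((preadditiveYoneda.map u).app (op x) (𝟙 x)) := rfl
  rw [h, show ((preadditiveYoneda.map u).app (op x)) (𝟙 x) = u from id_comp u]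

theorem key_bijective {x y : S} (u : x ⟶ y) {d : S}
    (g0 : y ⟶ d) (h0 : d ⟶ x⟦(1 : ℤ)⟧) (hT : Triangle.mk u g0 h0 ∈ distTriang S)
    (hd : ∀ ψ : preadditiveYoneda.obj d ⟶ B, ψ = 0)
    (hd' : ∀ ψ : preadditiveYoneda.obj (d⟦(-1 : ℤ)⟧) ⟶ B, ψ = 0) :
    Function.Bijective
      (fun g : preadditiveYoneda.obj y ⟶ B => preadditiveYoneda.map u ≫ g) := by
  constructor
  · intro g g' hgg'
    apply homext
    have e1 : B.map u.op (g.app (op y) (𝟙 y)) = B.map u.op (g'.app (op y) (𝟙 y)) := by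
      rw [← ev_comp, ← ev_comp]
      exact congrArg (fun ψ : preadditiveYoneda.obj x ⟶ B => ψ.app (op x) (𝟙 x)) hgg'
    have hexact : Function.Exact ⇑(B.map g0.op) ⇑(B.map u.op) := hB _ hT
    have h2 : B.map u.op (g.app (op y) (𝟙 y) - g'.app (op y) (𝟙 y)) = 0 := by
      rw [map_sub, e1, sub_self]
    obtain ⟨β, hβ⟩ := (hexact _).mp h2
    obtain ⟨ψ, hψ⟩ := ev_surjective B hB d β
    rw [hd ψ] at hψ
    have hβ0 : β = 0 := by rw [← hψ]; rfl
    rw [hβ0, map_zero] at hβ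
    have := hβ.symm
    rwa [sub_eq_zero] at this
  · intro f'
    obtain ⟨w0, hw0⟩ : ∃ w0 : (d⟦(-1 : ℤ)⟧ : S) ⟶ x,
        w0 = (Triangle.mk u g0 h0).invRotate.mor₁ := ⟨_, rfl⟩
    have hexact : Function.Exact ⇑(B.map u.op) ⇑(B.map w0.op) := by
      rw [hw0]
      exact hB _ (inv_rot_of_distTriang _ hT)
    have hzero : B.map w0.op (f'.app (op x) (𝟙 x)) = 0 := by
      rw [← ev_comp B w0 f']
      rw [hd' (preadditiveYoneda.map w0 ≫ f')]
      rfl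
    obtain ⟨b, hb⟩ := (hexact _).mp hzero
    obtain ⟨g, hg⟩ := ev_surjective B hB y b
    refine ⟨g, homext B _ _ ?_⟩
    show (preadditiveYoneda.map u ≫ g).app (op x) (𝟙 x) = f'.app (op x) (𝟙 x)
    rw [ev_comp, hg]
    exact hb

end Aux

/-- if `B ∈ Mod-S` is homological and annihilates `Y(M_j)`, `a_*` is a
Cauchy sequence whose cones beyond `n` lie (with their deshift) in `M_j`, and `A` is the
colimit of `Y(a_*)`, then for `i ≥ n` every map `Y(a_i) ⟶ B` factors uniquely through
`Y(a_i) ⟶ A`. -/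
theorem statement2 (μ : TriMetric S) (B : Sᵒᵖ ⥤ AddCommGrpCat.{v})
    (hBhom : IsHomological B)
    (a : ℕ ⥤ S) (ha : CauchySeq μ a)
    (c : Cocone (a ⋙ preadditiveYoneda)) (hc : IsColimit c)
    (j : ℕ) (hBj : ∀ s ∈ μ.M j, ∀ f : preadditiveYoneda.obj s ⟶ B, f = 0)
    (n : ℕ)
    (hn : ∀ i : ℕ, n ≤ i → ∀ (d : S) (g : a.obj (i + 1) ⟶ d) (h : d ⟶ (a.obj i)⟦(1 : ℤ)⟧),
      Triangle.mk (a.map (homOfLE (Nat.le_succ i))) g h ∈ (distTriang S) →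
        d⟦(-1 : ℤ)⟧ ∈ μ.M j ∧ d ∈ μ.M j) :
    ∀ i : ℕ, n ≤ i → ∀ f : preadditiveYoneda.obj (a.obj i) ⟶ B,
      ∃! φ : c.pt ⟶ B, c.ι.app i ≫ φ = f := by
  intro i hi f
  have key : ∀ k, n ≤ k → Function.Bijective
      (fun g : preadditiveYoneda.obj (a.obj (k + 1)) ⟶ B =>
        preadditiveYoneda.map (a.map (homOfLE (Nat.le_succ k))) ≫ g) := by
    intro k hk
    obtain ⟨d, g0, h0, hT⟩ := distinguished_cocone_triangle (a.map (homOfLE (Nat.le_succ k)))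
    obtain ⟨hd1, hd2⟩ := hn k hk d g0 h0 hT
    exact key_bijective B hBhom _ g0 h0 hT (fun ψ => hBj d hd2 ψ) (fun ψ => hBj _ hd1 ψ)
  have hinj : ∀ k, n ≤ k → ∀ g g' : preadditiveYoneda.obj (a.obj (k + 1)) ⟶ B,
      preadditiveYoneda.map (a.map (homOfLE (Nat.le_succ k))) ≫ g
        = preadditiveYoneda.map (a.map (homOfLE (Nat.le_succ k))) ≫ g' → g = g' :=
    fun k hk g g' h => (key k hk).1 h
  have hsurj : ∀ k, n ≤ k → ∀ f' : preadditiveYoneda.obj (a.obj k) ⟶ B,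
      ∃ g, preadditiveYoneda.map (a.map (homOfLE (Nat.le_succ k))) ≫ g = f' :=
    fun k hk f' => (key k hk).2 f'
  choose lift hlift using hsurj
  have exists_g : ∀ m, ∃ g : preadditiveYoneda.obj (a.obj m) ⟶ B,
      (∀ h : m ≤ i, g = preadditiveYoneda.map (a.map (homOfLE h)) ≫ f) ∧
      (∀ h : i ≤ m, preadditiveYoneda.map (a.map (homOfLE h)) ≫ g = f) := by
    intro m
    induction m with
    | zero =>
      refine ⟨preadditiveYoneda.map (a.map (homOfLE (Nat.zero_le i))) ≫ f,
        fun h => rfl, fun h => ?_⟩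
      obtain rfl : i = 0 := Nat.le_zero.mp h
      simp [show (homOfLE (Nat.zero_le 0) : (0 : ℕ) ⟶ 0) = 𝟙 0 from rfl]
    | succ m ih =>
      obtain ⟨g, h1, h2⟩ := ih
      by_cases hmi : m + 1 ≤ i
      · refine ⟨preadditiveYoneda.map (a.map (homOfLE hmi)) ≫ f, fun h => rfl, fun h => ?_⟩
        have hieq : i = m + 1 := le_antisymm h hmi
        subst hieq
        simp [show (homOfLE hmi : (m + 1 : ℕ) ⟶ m + 1) = 𝟙 (m + 1) from rfl]
      · have him : i ≤ m := by omega
        have hnm : n ≤ m := le_trans hi him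
        refine ⟨lift m hnm g, fun h => absurd h hmi, fun h => ?_⟩
        rw [show (homOfLE h : (i : ℕ) ⟶ m + 1) = homOfLE him ≫ homOfLE (Nat.le_succ m) from rfl,
          CategoryTheory.Functor.map_comp, CategoryTheory.Functor.map_comp, Category.assoc,
          hlift m hnm g, h2 him]
  choose F hF1 hF2 using exists_g
  have hFi : F i = f := by
    have h := hF1 i le_rfl
    rw [show (homOfLE (le_refl i) : (i : ℕ) ⟶ i) = 𝟙 i from rfl] at h
    simpa using h
  have uniq2 : ∀ m (h : i ≤ m), ∀ g g' : preadditiveYoneda.obj (a.obj m) ⟶ B,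
      preadditiveYoneda.map (a.map (homOfLE h)) ≫ g
        = preadditiveYoneda.map (a.map (homOfLE h)) ≫ g' → g = g' := by
    intro m h
    induction m, h using Nat.le_induction with
    | base =>
      intro g g' hgg'
      rw [show (homOfLE (le_refl i) : (i : ℕ) ⟶ i) = 𝟙 i from rfl] at hgg'
      simpa using hgg'
    | succ m hm ih =>
      intro g g' hgg'
      apply hinj m (le_trans hi hm)
      apply ih
      rwa [show (homOfLE (Nat.le_succ_of_le hm) : (i : ℕ) ⟶ m + 1)
          = homOfLE hm ≫ homOfLE (Nat.le_succ m) from rfl,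
        CategoryTheory.Functor.map_comp, CategoryTheory.Functor.map_comp,
        Category.assoc, Category.assoc] at hgg'
  have compat : ∀ m, preadditiveYoneda.map (a.map (homOfLE (Nat.le_succ m))) ≫ F (m + 1)
      = F m := by
    intro m
    by_cases hmi : m + 1 ≤ i
    · rw [hF1 (m + 1) hmi, hF1 m (le_trans (Nat.le_succ m) hmi),
        show (homOfLE (le_trans (Nat.le_succ m) hmi) : (m : ℕ) ⟶ i)
          = homOfLE (Nat.le_succ m) ≫ homOfLE hmi from rfl,
        CategoryTheory.Functor.map_comp, CategoryTheory.Functor.map_comp, Category.assoc]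
    · have him : i ≤ m := by omega
      apply uniq2 m him
      have e : preadditiveYoneda.map (a.map (homOfLE him))
            ≫ preadditiveYoneda.map (a.map (homOfLE (Nat.le_succ m))) ≫ F (m + 1)
          = preadditiveYoneda.map (a.map (homOfLE (le_trans him (Nat.le_succ m)))) ≫ F (m + 1) := by
        rw [show (homOfLE (le_trans him (Nat.le_succ m)) : (i : ℕ) ⟶ m + 1)
            = homOfLE him ≫ homOfLE (Nat.le_succ m) from rfl,
          CategoryTheory.Functor.map_comp, CategoryTheory.Functor.map_comp, Category.assoc]
      rw [e, hF2 (m + 1) _, hF2 m him]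
  have gen : ∀ m m' (h : m ≤ m'), preadditiveYoneda.map (a.map (homOfLE h)) ≫ F m' = F m := by
    intro m m' h
    induction m', h using Nat.le_induction with
    | base =>
      rw [show (homOfLE (le_refl m) : (m : ℕ) ⟶ m) = 𝟙 m from rfl]
      simp
    | succ m' hm ih =>
      rw [show (homOfLE (Nat.le_succ_of_le hm) : (m : ℕ) ⟶ m' + 1)
          = homOfLE hm ≫ homOfLE (Nat.le_succ m') from rfl,
        CategoryTheory.Functor.map_comp, CategoryTheory.Functor.map_comp, Category.assoc,
        compat m', ih]
  let K : Cocone (a ⋙ preadditiveYoneda) :=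
    { pt := B
      ι := { app := fun m => F m
             naturality := fun m m' h => by
               dsimp
               rw [comp_id]
               exact gen m m' (leOfHom h) } }
  refine ⟨hc.desc K, (hc.fac K i).trans hFi, ?_⟩
  intro φ' hφ'
  apply hc.uniq K
  intro m
  show c.ι.app m ≫ φ' = F m
  have upper : ∀ m (h : i ≤ m), c.ι.app m ≫ φ' = F m := by
    intro m h
    induction m, h using Nat.le_induction with
    | base => rw [hφ', hFi]
    | succ m hm ih =>
      apply hinj m (le_trans hi hm)
      rw [compat m, ← Category.assoc,
        show preadditiveYoneda.map (a.map (homOfLE (Nat.le_succ m))) ≫ c.ι.app (m + 1)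
          = c.ι.app m from c.w (homOfLE (Nat.le_succ m))]
      exact ih
  rcases le_total m i with h | h
  · rw [show c.ι.app m = preadditiveYoneda.map (a.map (homOfLE h)) ≫ c.ι.app i
        from (c.w (homOfLE h)).symm, Category.assoc, hφ', hF1 m h]
  · exact upper m h


end Stmt2
end

section
/- Let S be an essentially small triangulated category with a metric, and let F : S → T be a good extension into a triangulated category T with coproducts. If E ∈ T is the homotopy colimit of F(E_*) for a Cauchy sequence E_* in S, and X ∈ T is arbitrary, then the natural map Hom_T(E, X) → Hom_{Mod-S}(y(E), y(X)) is surjective with kernel isomorphic to lim^1 Hom_T(T F(E_i), X), where y : T → Mod-S sends A to Hom(F(−), A). -/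
namespace Stmt3

open CategoryTheory Category Limits Pretriangulated ZeroObject

universe v u u'

variable {S : Type u} [Category.{v} S] [Preadditive S] [HasZeroObject S]
  [HasShift S ℤ] [∀ n : ℤ, (CategoryTheory.shiftFunctor S n).Additive] [Pretriangulated S]

structure TriMetric (S : Type u) [Category.{v} S] [Preadditive S] [HasZeroObject S]
    [HasShift S ℤ] [∀ n : ℤ, (CategoryTheory.shiftFunctor S n).Additive] [Pretriangulated S] where
  M : ℕ → Set S
  zero_mem : ∀ i, (0 : S) ∈ M i
  antitone : ∀ i, M (i + 1) ⊆ M i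
  ext_closed : ∀ i, ∀ T ∈ (distTriang S), T.obj₁ ∈ M i → T.obj₃ ∈ M i → T.obj₂ ∈ M i

def CauchySeq (μ : TriMetric S) (E : ℕ ⥤ S) : Prop :=
  ∀ i : ℕ, 0 < i → ∀ j : ℤ, ∃ N : ℕ, 0 < N ∧ ∀ m m' : ℕ, N ≤ m → ∀ (hmm : m < m'),
    ∀ (D : S) (g : E.obj m' ⟶ D) (h : D ⟶ (E.obj m)⟦(1 : ℤ)⟧),
      Triangle.mk (E.map (homOfLE hmm.le)) g h ∈ (distTriang S) → D⟦j⟧ ∈ μ.M i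

variable {T : Type u'} [Category.{v} T] [Preadditive T] [HasZeroObject T]
  [HasShift T ℤ] [∀ n : ℤ, (CategoryTheory.shiftFunctor T n).Additive] [Pretriangulated T]
  [HasCoproducts.{0} T]

variable (F : S ⥤ T) [F.Additive]

/-- `y : T ⥤ Mod-S` on objects: `y(X) = Hom_T(F(−), X)`. -/
def yObj (X : T) : Sᵒᵖ ⥤ AddCommGrpCat.{v} := F.op ⋙ preadditiveYoneda.obj X

/-- `y` on morphisms. -/
def yHom {X X' : T} (φ : X ⟶ X') : yObj F X ⟶ yObj F X' :=
  Functor.whiskerLeft F.op (preadditiveYoneda.map φ)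

/-- The canonical map `Y(s₀) ⟶ y(X)` induced by `k : F(s₀) ⟶ X`. -/
def yMap {s₀ : S} {X : T} (k : F.obj s₀ ⟶ X) : preadditiveYoneda.obj s₀ ⟶ yObj F X where
  app s := AddCommGrpCat.ofHom
    { toFun := fun f => F.map f ≫ k
      map_zero' := by
        change F.map (0 : s.unop ⟶ s₀) ≫ k = 0
        simp
      map_add' := fun (f g : s.unop ⟶ s₀) => by
        change F.map (f + g) ≫ k = F.map f ≫ k + F.map g ≫ k
        exact (congrArg (· ≫ k) (F.map_add (f := f) (g := g))).trans (Preadditive.add_comp _ _ _ _ _ _) }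
  naturality a b t := by
    refine AddCommGrpCat.ext fun (f : a.unop ⟶ s₀) => ?_
    change F.map (t.unop ≫ f) ≫ k = F.map t.unop ≫ (F.map f ≫ k)
    exact (congrArg (· ≫ k) (F.map_comp t.unop f)).trans (Category.assoc _ _ _)

variable (E : ℕ ⥤ S)

/-- The endomorphism "shift" of `∐ F(E_i)` used in the definition of homotopy colimits. -/
noncomputable def shiftMapCoprod : (∐ fun i : ℕ => F.obj (E.obj i)) ⟶ (∐ fun i : ℕ => F.obj (E.obj i)) :=
  Sigma.desc fun i => F.map (E.map (homOfLE (Nat.le_succ i))) ≫ Sigma.ι (fun i : ℕ => F.obj (E.obj i)) (i + 1)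

/-- The map `1 − shift`. -/
noncomputable def oneMinusShift : (∐ fun i : ℕ => F.obj (E.obj i)) ⟶ (∐ fun i : ℕ => F.obj (E.obj i)) :=
  𝟙 _ - shiftMapCoprod F E

/-- `X`, with structure maps `π` from the coproduct, is a homotopy colimit of `F ∘ E` if
the triangle `∐ F(E_i) → ∐ F(E_i) → X → Σ ∐ F(E_i)` is distinguished. -/
def IsHoColim (X : T) (π : (∐ fun i : ℕ => F.obj (E.obj i)) ⟶ X)
    (δ : X ⟶ (∐ fun i : ℕ => F.obj (E.obj i))⟦(1 : ℤ)⟧) : Prop :=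
  Triangle.mk (oneMinusShift F E) π δ ∈ distTriang T

/-- `y(X)`, equipped with the canonical maps from the `Y(E_i)`, is the colimit of
`Y(E_*)` in `Mod-S`. -/
def IsYColimit (X : T) (π : (∐ fun i : ℕ => F.obj (E.obj i)) ⟶ X) : Prop :=
  ∀ (W : Sᵒᵖ ⥤ AddCommGrpCat.{v}) (w : ∀ i : ℕ, preadditiveYoneda.obj (E.obj i) ⟶ W),
    (∀ i : ℕ, preadditiveYoneda.map (E.map (homOfLE (Nat.le_succ i))) ≫ w (i + 1) = w i) →
    ∃! u : yObj F X ⟶ W,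
      ∀ i : ℕ, yMap F (Sigma.ι (fun i : ℕ => F.obj (E.obj i)) i ≫ π) ≫ u = w i

/-- `F : S ⥤ T` is a good extension with respect to the metric `μ` if for every Cauchy
sequence `E_*` in `S` the natural map `colim Y(E_*) ⟶ y(hocolim F(E_*))` is an
isomorphism, i.e. `y(hocolim F(E_*))` is the colimit of `Y(E_*)`. -/
def GoodExtension (μ : TriMetric S) : Prop :=
  ∀ (E : ℕ ⥤ S), CauchySeq μ E →
    ∀ (X : T) (π : (∐ fun i : ℕ => F.obj (E.obj i)) ⟶ X)
      (δ : X ⟶ (∐ fun i : ℕ => F.obj (E.obj i))⟦(1 : ℤ)⟧),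
      IsHoColim F E X π δ → IsYColimit F E X π


/-- The differential of the inverse system `i ↦ Hom(ΣF(E_i), X)`, whose cokernel is
`lim¹ Hom(ΣF(E_i), X)`. -/
noncomputable def dMap (Xt : T) :
    (∀ i : ℕ, ((F.obj (E.obj i))⟦(1 : ℤ)⟧ ⟶ Xt)) →+
      (∀ i : ℕ, ((F.obj (E.obj i))⟦(1 : ℤ)⟧ ⟶ Xt)) :=
  AddMonoidHom.mk'
    (fun x i => x i - (F.map (E.map (homOfLE (Nat.le_succ i))))⟦(1 : ℤ)⟧' ≫ x (i + 1))
    (by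
      intro x y
      funext i
      simp [Preadditive.comp_add]
      abel)

/-- `lim¹` of the inverse system `i ↦ Hom(ΣF(E_i), X)`. -/
noncomputable def lim1 (Xt : T) : Type _ :=
  (∀ i : ℕ, ((F.obj (E.obj i))⟦(1 : ℤ)⟧ ⟶ Xt)) ⧸ (dMap F E Xt).range

/-! ### Auxiliary lemmas -/

section Aux

set_option linter.unusedSectionVars false

lemma yMap_comp_yHom {s₀ : S} {X X' : T} (k : F.obj s₀ ⟶ X) (φ : X ⟶ X') :
    yMap F k ≫ yHom F φ = yMap F (k ≫ φ) := by
  ext s f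
  change (F.map f ≫ k) ≫ φ = F.map f ≫ (k ≫ φ)
  rw [Category.assoc]

lemma yoneda_comp_yMap {s₀ s₁ : S} {X : T} (e : s₀ ⟶ s₁) (k : F.obj s₁ ⟶ X) :
    preadditiveYoneda.map e ≫ yMap F k = yMap F (F.map e ≫ k) := by
  ext s f
  change F.map (f ≫ e) ≫ k = F.map f ≫ (F.map e ≫ k)
  exact (congrArg (· ≫ k) (F.map_comp _ _)).trans (Category.assoc _ _ _)

lemma yMap_zero {s₀ : S} {X : T} : yMap F (0 : F.obj s₀ ⟶ X) = 0 := by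
  ext s f
  change F.map f ≫ 0 = 0
  simp

lemma yoneda_app_eq {s₀ : S} {Xt : T} (w : preadditiveYoneda.obj s₀ ⟶ yObj F Xt) {s : S}
    (f : s ⟶ s₀) :
    w.app (Opposite.op s) f = F.map f ≫ w.app (Opposite.op s₀) (𝟙 s₀) := by
  have h := ConcreteCategory.congr_hom (w.naturality f.op) (𝟙 s₀)
  change w.app (Opposite.op s) (f ≫ 𝟙 s₀) = F.map f ≫ w.app (Opposite.op s₀) (𝟙 s₀) at h
  simpa using h

/-- Components of `oneMinusShift`. -/
lemma ι_oneMinusShift (i : ℕ) :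
    Sigma.ι (fun i : ℕ => F.obj (E.obj i)) i ≫ oneMinusShift F E =
      Sigma.ι (fun i : ℕ => F.obj (E.obj i)) i -
        F.map (E.map (homOfLE (Nat.le_succ i))) ≫ Sigma.ι (fun i : ℕ => F.obj (E.obj i)) (i + 1) := by
  simp [oneMinusShift, shiftMapCoprod, Preadditive.comp_sub]

/-- If `π ≫ φ = 0` and `y(Ept)` is a colimit, then `y(φ) = 0`. -/
lemma yHom_eq_zero {Ept Xt : T} {π : (∐ fun i : ℕ => F.obj (E.obj i)) ⟶ Ept}
    (hY : IsYColimit F E Ept π) (φ : Ept ⟶ Xt) (h : π ≫ φ = 0) :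
    yHom F φ = 0 := by
  obtain ⟨u, -, huniq⟩ := hY (yObj F Xt) (fun _ => 0) (fun i => comp_zero)
  have h1 : ∀ i : ℕ, yMap F (Sigma.ι (fun i : ℕ => F.obj (E.obj i)) i ≫ π) ≫ yHom F φ = 0 := by
    intro i
    rw [yMap_comp_yHom, assoc, h, comp_zero, yMap_zero]
  have h2 : ∀ i : ℕ, yMap F (Sigma.ι (fun i : ℕ => F.obj (E.obj i)) i ≫ π) ≫
      (0 : yObj F Ept ⟶ yObj F Xt) = 0 := fun i => comp_zero
  exact (huniq _ h1).trans (huniq _ h2).symm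

/-- Conversely, `y(φ) = 0` forces `π ≫ φ = 0`. -/
lemma comp_eq_zero_of_yHom {Ept Xt : T} {π : (∐ fun i : ℕ => F.obj (E.obj i)) ⟶ Ept}
    (φ : Ept ⟶ Xt) (h : yHom F φ = 0) : π ≫ φ = 0 := by
  apply Sigma.hom_ext
  intro i
  have h1 := ConcreteCategory.congr_hom
    (congrArg (fun η : yObj F Ept ⟶ yObj F Xt => η.app (Opposite.op (E.obj i))) h)
    (show F.obj (E.obj i) ⟶ Ept from Sigma.ι (fun i : ℕ => F.obj (E.obj i)) i ≫ π)
  change (Sigma.ι (fun i : ℕ => F.obj (E.obj i)) i ≫ π) ≫ φ =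
    ((0 : yObj F Ept ⟶ yObj F Xt).app (Opposite.op (E.obj i)))
      (Sigma.ι (fun i : ℕ => F.obj (E.obj i)) i ≫ π) at h1
  rw [comp_zero, ← assoc]
  exact h1

/-- The comparison isomorphism `∐ (F(E_i)⟦1⟧) ⟶ (∐ F(E_i))⟦1⟧`. -/
noncomputable def tau :
    (∐ fun i : ℕ => (F.obj (E.obj i))⟦(1 : ℤ)⟧) ⟶ (∐ fun i : ℕ => F.obj (E.obj i))⟦(1 : ℤ)⟧ :=
  sigmaComparison (shiftFunctor T (1 : ℤ)) (fun i : ℕ => F.obj (E.obj i))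

instance : IsIso (tau F E) := by
  unfold tau
  infer_instance

/-- The conjugate of `(oneMinusShift)⟦1⟧` on the coproduct of the shifts. -/
noncomputable def Mop :
    (∐ fun i : ℕ => (F.obj (E.obj i))⟦(1 : ℤ)⟧) ⟶ (∐ fun i : ℕ => (F.obj (E.obj i))⟦(1 : ℤ)⟧) :=
  𝟙 _ - Limits.Sigma.desc fun i => (F.map (E.map (homOfLE (Nat.le_succ i))))⟦(1 : ℤ)⟧' ≫
    Sigma.ι (fun i : ℕ => (F.obj (E.obj i))⟦(1 : ℤ)⟧) (i + 1)

lemma Mop_comp_tau : Mop F E ≫ tau F E = tau F E ≫ (oneMinusShift F E)⟦(1 : ℤ)⟧' := by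
  apply Sigma.hom_ext
  intro i
  rw [← assoc, ← assoc]
  simp only [Mop, tau, Preadditive.comp_sub, comp_id, colimit.ι_desc, Cofan.mk_pt,
    Cofan.mk_ι_app, Preadditive.sub_comp, assoc, ι_comp_sigmaComparison,
    oneMinusShift, shiftMapCoprod]
  rw [← Functor.map_comp, ← Functor.map_comp, ← Functor.map_sub, Preadditive.comp_sub, comp_id,
    colimit.ι_desc]
  rfl

lemma Mop_desc {Xt : T} (x : ∀ i : ℕ, ((F.obj (E.obj i))⟦(1 : ℤ)⟧ ⟶ Xt)) :
    Mop F E ≫ Sigma.desc x = Sigma.desc (dMap F E Xt x) := by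
  apply Sigma.hom_ext
  intro i
  simp [Mop, dMap, Preadditive.sub_comp, Preadditive.comp_sub]

lemma desc_add {Xt : T} (x y : ∀ i : ℕ, ((F.obj (E.obj i))⟦(1 : ℤ)⟧ ⟶ Xt)) :
    Sigma.desc (x + y) = Sigma.desc x + Sigma.desc y := by
  apply Sigma.hom_ext
  intro i
  simp [Preadditive.comp_add]

end Aux

/-- for a good extension `F : S ⥤ T`, a homotopy colimit `E` of a Cauchy
sequence, and any `X ∈ T`, the natural map `Hom_T(E, X) ⟶ Hom_{Mod-S}(y(E), y(X))` is
surjective, with kernel isomorphic to `lim¹ Hom_T(Σ F(E_i), X)`. -/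
theorem statement3 [F.Full] [F.Faithful] [F.CommShift ℤ] [F.IsTriangulated]
    (μ : TriMetric S) (hgood : GoodExtension F μ)
    (E : ℕ ⥤ S) (hE : CauchySeq μ E)
    (Ept : T) (π : (∐ fun i : ℕ => F.obj (E.obj i)) ⟶ Ept)
    (δ : Ept ⟶ (∐ fun i : ℕ => F.obj (E.obj i))⟦(1 : ℤ)⟧)
    (hhoc : IsHoColim F E Ept π δ) (Xt : T) :
    Function.Surjective (fun φ : Ept ⟶ Xt => yHom F φ) ∧
    Nonempty ({φ : Ept ⟶ Xt // yHom F φ = 0} ≃ lim1 F E Xt) := by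
  have hY : IsYColimit F E Ept π := hgood E hE Ept π δ hhoc
  have hdist : Triangle.mk (oneMinusShift F E) π δ ∈ distTriang T := hhoc
  have hsπ : shiftMapCoprod F E ≫ π = π := by
    have h0 := comp_distTriang_mor_zero₁₂ _ hdist
    change oneMinusShift F E ≫ π = 0 at h0
    rw [oneMinusShift, Preadditive.sub_comp, id_comp, sub_eq_zero] at h0
    exact h0.symm
  constructor
  · -- Surjectivity
    intro u
    set w : ∀ i : ℕ, preadditiveYoneda.obj (E.obj i) ⟶ yObj F Xt :=
      fun i => yMap F (Sigma.ι (fun i : ℕ => F.obj (E.obj i)) i ≫ π) ≫ u with hw_def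
    have hw : ∀ i : ℕ, preadditiveYoneda.map (E.map (homOfLE (Nat.le_succ i))) ≫ w (i + 1) = w i := by
      intro i
      rw [hw_def, ← assoc, yoneda_comp_yMap]
      have h4 : F.map (E.map (homOfLE (Nat.le_succ i))) ≫
          Sigma.ι (fun i : ℕ => F.obj (E.obj i)) (i + 1) =
          Sigma.ι (fun i : ℕ => F.obj (E.obj i)) i ≫ shiftMapCoprod F E := by
        simp [shiftMapCoprod]
      have h3 : F.map (E.map (homOfLE (Nat.le_succ i))) ≫
          Sigma.ι (fun i : ℕ => F.obj (E.obj i)) (i + 1) ≫ π =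
          Sigma.ι (fun i : ℕ => F.obj (E.obj i)) i ≫ π := by
        rw [← assoc, h4, assoc, hsπ]
      rw [h3]
    set f : ∀ i : ℕ, F.obj (E.obj i) ⟶ Xt :=
      fun i => (w i).app (Opposite.op (E.obj i)) (𝟙 (E.obj i)) with hf_def
    have hcompat : ∀ i : ℕ, F.map (E.map (homOfLE (Nat.le_succ i))) ≫ f (i + 1) = f i := by
      intro i
      have h1 := ConcreteCategory.congr_hom
        (congrArg (fun η : preadditiveYoneda.obj (E.obj i) ⟶ yObj F Xt =>
          η.app (Opposite.op (E.obj i))) (hw i)) (𝟙 (E.obj i))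
      change (w (i + 1)).app (Opposite.op (E.obj i)) (𝟙 (E.obj i) ≫ E.map (homOfLE (Nat.le_succ i)))
        = (w i).app (Opposite.op (E.obj i)) (𝟙 (E.obj i)) at h1
      rw [id_comp, yoneda_app_eq] at h1
      exact h1
    have hg : oneMinusShift F E ≫ Sigma.desc f = 0 := by
      apply Sigma.hom_ext
      intro i
      rw [← assoc, ι_oneMinusShift, Preadditive.sub_comp, assoc]
      simp [hcompat i]
    obtain ⟨φ, hφ₀⟩ := Triangle.yoneda_exact₂ _ hdist (Sigma.desc f) hg
    change Ept ⟶ Xt at φ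
    have hφ : Limits.Sigma.desc f = π ≫ φ := hφ₀
    refine ⟨φ, ?_⟩
    obtain ⟨u', hu', huniq⟩ := hY (yObj F Xt) w hw
    have h1 : ∀ i : ℕ, yMap F (Sigma.ι (fun i : ℕ => F.obj (E.obj i)) i ≫ π) ≫ yHom F φ = w i := by
      intro i
      refine (yMap_comp_yHom F _ _).trans ?_
      have hfi : (Sigma.ι (fun i : ℕ => F.obj (E.obj i)) i ≫ π) ≫ φ = f i := by
        rw [assoc, ← hφ]
        simp
      refine (congrArg (yMap F) hfi).trans ?_
      apply NatTrans.ext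
      funext s
      refine AddCommGrpCat.ext fun h => ?_
      obtain ⟨s⟩ := s
      change F.map h ≫ f i = (w i).app (Opposite.op s) h
      exact (yoneda_app_eq F (w i) h).symm
    have h2 : ∀ i : ℕ, yMap F (Sigma.ι (fun i : ℕ => F.obj (E.obj i)) i ≫ π) ≫ u = w i :=
      fun i => rfl
    exact (huniq _ h1).trans (huniq _ h2).symm
  · -- Kernel description
    set Φ : (∀ i : ℕ, ((F.obj (E.obj i))⟦(1 : ℤ)⟧ ⟶ Xt)) → (Ept ⟶ Xt) :=
      fun x => δ ≫ inv (tau F E) ≫ Sigma.desc x with hΦ_def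
    have hπΦ : ∀ x, π ≫ Φ x = 0 := by
      intro x
      have h0 := comp_distTriang_mor_zero₂₃ _ hdist
      change π ≫ δ = 0 at h0
      rw [hΦ_def]
      rw [← assoc, h0, zero_comp]
    have hΦker : ∀ x, yHom F (Φ x) = 0 := fun x => yHom_eq_zero F E hY (Φ x) (hπΦ x)
    have hMop_eq : Mop F E = tau F E ≫ (oneMinusShift F E)⟦(1 : ℤ)⟧' ≫ inv (tau F E) := by
      rw [← assoc, ← Mop_comp_tau, assoc, IsIso.hom_inv_id, comp_id]
    have hΦdMap : ∀ z, Φ (dMap F E Xt z) = 0 := by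
      intro z
      have hδL : δ ≫ (oneMinusShift F E)⟦(1 : ℤ)⟧' = 0 := comp_distTriang_mor_zero₃₁ _ hdist
      show δ ≫ inv (tau F E) ≫ Limits.Sigma.desc (dMap F E Xt z) = 0
      rw [← Mop_desc, hMop_eq]
      simp only [assoc, IsIso.inv_hom_id_assoc]
      rw [← assoc, hδL, zero_comp]
    have hΦadd : ∀ x y, Φ (x + y) = Φ x + Φ y := by
      intro x y
      rw [hΦ_def]
      show δ ≫ inv (tau F E) ≫ Sigma.desc (x + y) = _
      rw [desc_add, Preadditive.comp_add, Preadditive.comp_add]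
    have hΦrel : ∀ a b, -a + b ∈ (dMap F E Xt).range → Φ a = Φ b := by
      rintro a b ⟨z, hz⟩
      have h1 : Φ (a + (-a + b)) = Φ a + Φ (-a + b) := hΦadd _ _
      rw [add_neg_cancel_left] at h1
      rw [h1, ← hz, hΦdMap, add_zero]
    -- Φ x = 0 implies x ∈ range dMap
    have hΦ0 : ∀ x, Φ x = 0 → x ∈ (dMap F E Xt).range := by
      intro x hx
      have hrot := rot_of_distTriang _ hdist
      have hf0 : δ ≫ (inv (tau F E) ≫ Sigma.desc x) = 0 := by
        rw [← assoc]
        rw [hΦ_def] at hx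
        rw [← hx]
        simp [hΦ_def]
      obtain ⟨g, hg⟩ := Triangle.yoneda_exact₃ _ hrot _ hf0
      change ((∐ fun i : ℕ => F.obj (E.obj i))⟦(1 : ℤ)⟧ ⟶ Xt) at g
      -- hg : inv τ ≫ desc x = (-(oneMinusShift)⟦1⟧') ≫ g
      set z : ∀ i : ℕ, ((F.obj (E.obj i))⟦(1 : ℤ)⟧ ⟶ Xt) :=
        fun i => Sigma.ι (fun i : ℕ => (F.obj (E.obj i))⟦(1 : ℤ)⟧) i ≫ tau F E ≫ (-g) with hz_def
      refine ⟨z, ?_⟩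
      have hdescz : Sigma.desc z = tau F E ≫ (-g) := by
        apply Sigma.hom_ext
        intro i
        simp [hz_def]
      have hdesceq : Sigma.desc (dMap F E Xt z) = Sigma.desc x := by
        rw [← Mop_desc, hdescz, hMop_eq]
        rw [assoc, assoc]
        simp only [IsIso.inv_hom_id_assoc]
        rw [← assoc]
        have : (oneMinusShift F E)⟦(1 : ℤ)⟧' ≫ (-g) = inv (tau F E) ≫ Sigma.desc x := by
          rw [hg]
          simp [Preadditive.neg_comp, Preadditive.comp_neg]
          exact (Preadditive.neg_comp _ _).symm
        rw [assoc, this, ← assoc, IsIso.hom_inv_id, id_comp]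
      funext i
      have := congrArg (fun h => Sigma.ι (fun i : ℕ => (F.obj (E.obj i))⟦(1 : ℤ)⟧) i ≫ h) hdesceq
      simpa using this
    -- surjectivity onto the kernel
    have hΦsurj : ∀ φ : Ept ⟶ Xt, yHom F φ = 0 → ∃ x, Φ x = φ := by
      intro φ hφ
      have hπφ : π ≫ φ = 0 := comp_eq_zero_of_yHom F E φ hφ
      obtain ⟨g, hg₀⟩ := Triangle.yoneda_exact₃ _ hdist φ hπφ
      change ((∐ fun i : ℕ => F.obj (E.obj i))⟦(1 : ℤ)⟧ ⟶ Xt) at g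
      have hg : φ = δ ≫ g := hg₀
      refine ⟨fun i => Sigma.ι (fun i : ℕ => (F.obj (E.obj i))⟦(1 : ℤ)⟧) i ≫ tau F E ≫ g, ?_⟩
      rw [hΦ_def]
      show δ ≫ inv (tau F E) ≫ Sigma.desc _ = φ
      have : Sigma.desc (fun i => Sigma.ι (fun i : ℕ => (F.obj (E.obj i))⟦(1 : ℤ)⟧) i ≫
          tau F E ≫ g) = tau F E ≫ g := by
        apply Sigma.hom_ext
        intro i
        simp
      rw [this, ← assoc, ← assoc, assoc δ _ _, IsIso.inv_hom_id, comp_id, ← hg]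
    -- assemble the equivalence
    let q : lim1 F E Xt → {φ : Ept ⟶ Xt // yHom F φ = 0} :=
      Quotient.lift (fun x => (⟨Φ x, hΦker x⟩ : {φ : Ept ⟶ Xt // yHom F φ = 0}))
        (fun a b hab => Subtype.ext (hΦrel a b (QuotientAddGroup.leftRel_apply.mp hab)))
    have hqbij : Function.Bijective q := by
      constructor
      · intro x y hxy
        obtain ⟨a, rfl⟩ := Quotient.exists_rep x
        obtain ⟨b, rfl⟩ := Quotient.exists_rep y
        have hab : Φ a = Φ b := congrArg Subtype.val hxy
        apply Quotient.sound
        apply QuotientAddGroup.leftRel_apply.mpr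
        apply hΦ0
        have h1 : Φ (a + (-a + b)) = Φ a + Φ (-a + b) := hΦadd _ _
        rw [add_neg_cancel_left, hab] at h1
        exact (add_eq_left.mp h1.symm)
      · rintro ⟨φ, hφ⟩
        obtain ⟨x, hx⟩ := hΦsurj φ hφ
        exact ⟨Quotient.mk _ x, Subtype.ext hx⟩
    exact ⟨(Equiv.ofBijective q hqbij).symm⟩

end Stmt3
end

section
/- Let F : S → T be a fully faithful triangulated functor with T having coproducts, S essentially small with metric {M_i}, and y : T → Mod-S the functor y(A) = Hom(F(−), A). Then y^{-1}(Fc(S)) = ⋂_{j ∈ ℤ} ⋃_{i ∈ ℕ} [F(T^j M_i)]^⊥, and in particular y^{-1}(Fc(S)) is a thick subcategory of T. -/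
namespace Stmt5

open CategoryTheory Category Limits Pretriangulated ZeroObject

universe v u u'

variable {S : Type u} [Category.{v} S] [Preadditive S] [HasZeroObject S]
  [HasShift S ℤ] [∀ n : ℤ, (CategoryTheory.shiftFunctor S n).Additive] [Pretriangulated S]

structure TriMetric (S : Type u) [Category.{v} S] [Preadditive S] [HasZeroObject S]
    [HasShift S ℤ] [∀ n : ℤ, (CategoryTheory.shiftFunctor S n).Additive] [Pretriangulated S] where
  M : ℕ → Set S
  zero_mem : ∀ i, (0 : S) ∈ M i
  antitone : ∀ i, M (i + 1) ⊆ M i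
  ext_closed : ∀ i, ∀ T ∈ (distTriang S), T.obj₁ ∈ M i → T.obj₃ ∈ M i → T.obj₂ ∈ M i

def CauchySeq (μ : TriMetric S) (E : ℕ ⥤ S) : Prop :=
  ∀ i : ℕ, 0 < i → ∀ j : ℤ, ∃ N : ℕ, 0 < N ∧ ∀ m m' : ℕ, N ≤ m → ∀ (hmm : m < m'),
    ∀ (D : S) (g : E.obj m' ⟶ D) (h : D ⟶ (E.obj m)⟦(1 : ℤ)⟧),
      Triangle.mk (E.map (homOfLE hmm.le)) g h ∈ (distTriang S) → D⟦j⟧ ∈ μ.M i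

variable {T : Type u'} [Category.{v} T] [Preadditive T] [HasZeroObject T]
  [HasShift T ℤ] [∀ n : ℤ, (CategoryTheory.shiftFunctor T n).Additive] [Pretriangulated T]
  [HasCoproducts.{0} T]

variable (F : S ⥤ T) [F.Additive]

/-- `y : T ⥤ Mod-S` on objects: `y(X) = Hom_T(F(−), X)`. -/
def yObj (X : T) : Sᵒᵖ ⥤ AddCommGrpCat.{v} := F.op ⋙ preadditiveYoneda.obj X

/-- `y` on morphisms. -/
def yHom {X X' : T} (φ : X ⟶ X') : yObj F X ⟶ yObj F X' :=
  Functor.whiskerLeft F.op (preadditiveYoneda.map φ)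

/-- The canonical map `Y(s₀) ⟶ y(X)` induced by `k : F(s₀) ⟶ X`. -/
def yMap {s₀ : S} {X : T} (k : F.obj s₀ ⟶ X) : preadditiveYoneda.obj s₀ ⟶ yObj F X where
  app s :=
    AddCommGrpCat.ofHom
    { toFun := fun f => F.map f ≫ k
      map_zero' := by exact (congrArg (· ≫ k) (F.map_zero s.unop s₀)).trans Limits.zero_comp
      map_add' := fun f g => by
        change F.map (f + g) ≫ k = F.map f ≫ k + F.map g ≫ k
        exact (congrArg (· ≫ k) (F.map_add (f := (f : s.unop ⟶ s₀)) (g := g))).trans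
          (Preadditive.add_comp _ _ _ _ _ _) }
  naturality a b t := by
    ext f
    change F.map (t.unop ≫ f) ≫ k = F.map t.unop ≫ (F.map f ≫ k)
    exact (congrArg (· ≫ k) (F.map_comp t.unop (f : a.unop ⟶ s₀))).trans (Category.assoc _ _ _)


/-- The right perpendicular of a class of objects. -/
def perpSet (P : Set T) : Set T := {X | ∀ p ∈ P, ∀ f : p ⟶ X, f = 0}

/-- `Fc(S) ⊆ Mod-S`: the compactly supported objects. -/
def Fc (μ : TriMetric S) : Set (Sᵒᵖ ⥤ AddCommGrpCat.{v}) :=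
  {A | ∀ j : ℤ, ∃ i : ℕ, ∀ s ∈ μ.M i, ∀ f : preadditiveYoneda.obj (s⟦j⟧) ⟶ A, f = 0}


set_option linter.unusedSectionVars false

lemma key (s₀ : S) (X : T) :
    (∀ f : preadditiveYoneda.obj s₀ ⟶ yObj F X, f = 0) ↔ (∀ g : F.obj s₀ ⟶ X, g = 0) := by
  constructor
  · intro h g
    have h0 := h (yMap F g)
    have : (yMap F g).app (Opposite.op s₀) (𝟙 s₀) = g := by
      change F.map (𝟙 s₀) ≫ g = g
      simp
    rw [h0] at this
    exact this.symm
  · intro hg f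
    have hk : f.app (Opposite.op s₀) (𝟙 s₀) = 0 := hg _
    ext c x
    have h2 := ConcreteCategory.congr_hom (f.naturality x.op) (𝟙 s₀)
    have h3 : (f.app c) (x ≫ 𝟙 s₀) = F.map x ≫ (f.app (Opposite.op s₀) (𝟙 s₀)) := h2
    rw [hk] at h3
    exact (congrArg (f.app c) (Category.comp_id (x : c.unop ⟶ s₀)).symm).trans
      (h3.trans Limits.comp_zero)

lemma antitone_le (μ : TriMetric S) {m n : ℕ} (h : m ≤ n) : μ.M n ⊆ μ.M m := by
  induction h with
  | refl => exact fun _ h => h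
  | step _ ih => exact fun x hx => ih (μ.antitone _ hx)

def eIso [F.CommShift ℤ] (s : S) (j k m : ℤ) (h : j + k = m) : F.obj (s⟦m⟧) ≅ (F.obj (s⟦j⟧))⟦k⟧ :=
  F.mapIso ((shiftFunctorAdd' S j k m h).app s) ≪≫ (F.commShiftIso k).app (s⟦j⟧)

lemma mem_iff (μ : TriMetric S) (X : T) :
    yObj F X ∈ Fc μ ↔ ∀ j : ℤ, ∃ i : ℕ, ∀ s ∈ μ.M i, ∀ g : F.obj (s⟦j⟧) ⟶ X, g = 0 := by
  unfold Fc
  simp only [Set.mem_setOf_eq]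
  constructor
  · intro h j; obtain ⟨i, hi⟩ := h j
    exact ⟨i, fun s hs => (key F _ X).mp (fun f => hi s hs f)⟩
  · intro h j; obtain ⟨i, hi⟩ := h j
    exact ⟨i, fun s hs f => (key F _ X).mpr (hi s hs) f⟩

/-- `y⁻¹(Fc(S)) = ⋂_j ⋃_i [F(T^j M_i)]^⊥`, and this subcategory of `T` is
thick: closed under isomorphisms, zero, shifts in both directions, extensions and
direct summands. -/
theorem statement5 [F.Full] [F.Faithful] [F.CommShift ℤ] [F.IsTriangulated]
    (μ : TriMetric S) :
    ({X : T | yObj F X ∈ Fc μ} =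
      ⋂ j : ℤ, ⋃ i : ℕ, perpSet ((fun s : S => F.obj (s⟦j⟧)) '' μ.M i)) ∧
    ((0 : T) ∈ {X : T | yObj F X ∈ Fc μ}) ∧
    (∀ X Y : T, (X ≅ Y) → yObj F X ∈ Fc μ → yObj F Y ∈ Fc μ) ∧
    (∀ X : T, yObj F X ∈ Fc μ ↔ yObj F (X⟦(1 : ℤ)⟧) ∈ Fc μ) ∧
    (∀ Tr ∈ (distTriang T), yObj F Tr.obj₁ ∈ Fc μ → yObj F Tr.obj₃ ∈ Fc μ →
      yObj F Tr.obj₂ ∈ Fc μ) ∧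
    (∀ (X Y : T) (r : X ⟶ Y) (s : Y ⟶ X), s ≫ r = 𝟙 Y →
      yObj F X ∈ Fc μ → yObj F Y ∈ Fc μ) := by
  refine ⟨?_, ?_, ?_, ?_, ?_, ?_⟩
  · ext X
    simp only [Set.mem_setOf_eq, Set.mem_iInter, Set.mem_iUnion]
    rw [mem_iff]
    apply forall_congr'; intro j
    apply exists_congr; intro i
    constructor
    · intro h p hp f
      obtain ⟨s, hs, rfl⟩ := hp
      exact h s hs f
    · intro h s hs g
      exact h _ ⟨s, hs, rfl⟩ g
  · rw [Set.mem_setOf_eq, mem_iff]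
    intro j; exact ⟨0, fun s hs g => (isZero_zero T).eq_of_tgt g 0⟩
  · intro X Y e hX
    rw [mem_iff] at hX ⊢
    intro j; obtain ⟨i, hi⟩ := hX j
    refine ⟨i, fun s hs g => ?_⟩
    have hz : g ≫ e.inv = 0 := hi s hs _
    calc g = (g ≫ e.inv) ≫ e.hom := by simp
      _ = 0 := by rw [hz, zero_comp]
  · intro X
    rw [mem_iff, mem_iff]
    constructor
    · intro h j
      obtain ⟨i, hi⟩ := h (j + -1)
      refine ⟨i, fun s hs g => ?_⟩
      have hz : (eIso F s j (-1) (j + -1) rfl).hom ≫ (shiftFunctor T (-1 : ℤ)).map g ≫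
          ((shiftFunctorCompIsoId T (1 : ℤ) (-1) (by ring)).hom.app X) = 0 := hi s hs _
      have hm : (shiftFunctor T (-1 : ℤ)).map g = 0 := by
        rw [← cancel_epi (eIso F s j (-1) (j + -1) rfl).hom,
            ← cancel_mono ((shiftFunctorCompIsoId T (1 : ℤ) (-1) (by ring)).hom.app X)]
        simpa using hz
      apply (shiftFunctor T (-1 : ℤ)).map_injective
      rw [hm, Functor.map_zero]
    · intro h j
      obtain ⟨i, hi⟩ := h (j + 1)
      refine ⟨i, fun s hs g => ?_⟩
      have hz : (eIso F s j 1 (j + 1) rfl).hom ≫ (shiftFunctor T (1 : ℤ)).map g = 0 :=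
        hi s hs _
      have hm : (shiftFunctor T (1 : ℤ)).map g = 0 := by
        rw [← cancel_epi (eIso F s j 1 (j + 1) rfl).hom]
        simpa using hz
      apply (shiftFunctor T (1 : ℤ)).map_injective
      rw [hm, Functor.map_zero]
  · intro Tr hTr h1 h3
    rw [mem_iff] at h1 h3 ⊢
    intro j
    obtain ⟨i1, hi1⟩ := h1 j
    obtain ⟨i3, hi3⟩ := h3 j
    refine ⟨max i1 i3, fun s hs g => ?_⟩
    have hg3 : g ≫ Tr.mor₂ = 0 := hi3 s (antitone_le μ (le_max_right i1 i3) hs) _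
    obtain ⟨h, hh⟩ := Triangle.coyoneda_exact₂ Tr hTr g hg3
    rw [hh, hi1 s (antitone_le μ (le_max_left i1 i3) hs) h, zero_comp]
  · intro X Y r sY hsr hX
    rw [mem_iff] at hX ⊢
    intro j
    obtain ⟨i, hi⟩ := hX j
    refine ⟨i, fun t ht g => ?_⟩
    have hz : g ≫ sY = 0 := hi t ht _
    calc g = (g ≫ sY) ≫ r := by rw [assoc, hsr, comp_id]
      _ = 0 := by rw [hz, zero_comp]


end Stmt5
end

section
/- Let T be a noetherian triangulated category with a t-structure (T^{≤0}, T^{≥0}) in the preferred equivalence class, witnessing integer N. Then for every object H ∈ T^-_c and every integer m ≥ 0, there exists an object G ∈ T^b_c such that H^⊥ ⊇ T^{≥ −m} ∩ G^⊥ (perpendiculars computed in T). -/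
namespace Stmt12

open CategoryTheory Category Limits Pretriangulated ZeroObject

universe v u

variable {T : Type u} [Category.{v} T] [Preadditive T] [HasZeroObject T]
  [HasShift T ℤ] [∀ n : ℤ, (CategoryTheory.shiftFunctor T n).Additive] [Pretriangulated T]
  [HasCoproducts.{v} T]

/-- The canonical map `⨁ᵢ Hom(X, fᵢ) ⟶ Hom(X, ∐ f)`. -/
noncomputable def canMap {ι : Type v} [DecidableEq ι] (f : ι → T) (X : T) :
    (DirectSum ι fun i : ι => (X ⟶ f i)) →+ (X ⟶ ∐ f) :=
  DirectSum.toAddMonoid fun i =>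
    AddMonoidHom.mk' (fun (h : X ⟶ f i) => h ≫ Sigma.ι f i)
      (fun _ _ => Preadditive.add_comp _ _ _ _ _ _)

/-- An object `X` is compact if `Hom(X, −)` commutes with coproducts. -/
def IsCompactObject (X : T) : Prop :=
  ∀ {ι : Type v} [DecidableEq ι] (f : ι → T), Function.Bijective (canMap f X)

/-- `G` generates `T`: an object with no nonzero maps from any shift of `G` is zero. -/
def IsGenerator (G : T) : Prop :=
  ∀ X : T, (∀ n : ℤ, ∀ f : G⟦n⟧ ⟶ X, f = 0) → IsZero X

/-- A t-structure on `T`, given by the sequences of subcategories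
`le n = T^{≤ n}` and `ge n = T^{≥ n}`. -/
structure TStruct (T : Type u) [Category.{v} T] [Preadditive T] [HasZeroObject T]
    [HasShift T ℤ] [∀ n : ℤ, (CategoryTheory.shiftFunctor T n).Additive]
    [Pretriangulated T] where
  le : ℤ → Set T
  ge : ℤ → Set T
  le_iso : ∀ n, ∀ X Y : T, (X ≅ Y) → X ∈ le n → Y ∈ le n
  ge_iso : ∀ n, ∀ X Y : T, (X ≅ Y) → X ∈ ge n → Y ∈ ge n
  le_shift : ∀ (n : ℤ) (X : T), X ∈ le n ↔ X⟦(1 : ℤ)⟧ ∈ le (n - 1)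
  ge_shift : ∀ (n : ℤ) (X : T), X ∈ ge n ↔ X⟦(1 : ℤ)⟧ ∈ ge (n - 1)
  le_mono : ∀ n : ℤ, le n ⊆ le (n + 1)
  ge_anti : ∀ n : ℤ, ge (n + 1) ⊆ ge n
  hom_zero : ∀ X ∈ le 0, ∀ Y ∈ ge 1, ∀ f : X ⟶ Y, f = 0
  exists_triangle : ∀ X : T, ∃ (A B : T) (f : A ⟶ X) (g : X ⟶ B) (h : B ⟶ A⟦(1 : ℤ)⟧),
    A ∈ le 0 ∧ B ∈ ge 1 ∧ Triangle.mk f g h ∈ (distTriang T)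

/-- A cocomplete pre-aisle: closed under isomorphisms, zero, suspension, extensions,
direct summands and small coproducts. -/
def IsCocompletePreAisle (P : Set T) : Prop :=
  (∀ X Y : T, (X ≅ Y) → X ∈ P → Y ∈ P) ∧ ((0 : T) ∈ P) ∧
  (∀ X ∈ P, X⟦(1 : ℤ)⟧ ∈ P) ∧
  (∀ Tr ∈ (distTriang T), Tr.obj₁ ∈ P → Tr.obj₃ ∈ P → Tr.obj₂ ∈ P) ∧
  (∀ (X Y : T) (r : X ⟶ Y) (s : Y ⟶ X), s ≫ r = 𝟙 Y → X ∈ P → Y ∈ P) ∧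
  (∀ {ι : Type v} (f : ι → T), (∀ i, f i ∈ P) → (∐ f) ∈ P)

/-- `overline{⟨G⟩}^{(−∞,−n]}`: the smallest cocomplete pre-aisle containing `G⟦m⟧` for
all `m ≥ n`. -/
def aisleGen (G : T) (n : ℤ) : Set T :=
  ⋂₀ {P | IsCocompletePreAisle P ∧ ∀ m : ℤ, n ≤ m → G⟦m⟧ ∈ P}

/-- A t-structure is in the preferred equivalence class if it is equivalent to the
t-structure generated by a compact generator `G`, i.e. there is `A > 0` with
`⟨G⟩-aisle shifted by A ⊆ T^{≤0} ⊆ ⟨G⟩-aisle shifted by −A`. -/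
def InPreferredClass (t : TStruct T) : Prop :=
  ∃ G : T, IsCompactObject G ∧ IsGenerator G ∧
    ∃ A : ℤ, 0 < A ∧ aisleGen G A ⊆ t.le 0 ∧ t.le 0 ⊆ aisleGen G (-A)

/-- The subcategory `T^-_c`: objects admitting, for every `n`, a triangle
`E ⟶ X ⟶ D` with `E` compact and `D ∈ T^{≤ n}`. -/
def Tminus (t : TStruct T) : Set T :=
  {X | ∀ n : ℤ, ∃ (E D : T) (f : E ⟶ X) (g : X ⟶ D) (h : D ⟶ E⟦(1 : ℤ)⟧),
    IsCompactObject E ∧ D ∈ t.le n ∧ Triangle.mk f g h ∈ (distTriang T)}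

/-- The subcategory `T^b_c = T^-_c ∩ T^b`. -/
def Tbc (t : TStruct T) : Set T :=
  Tminus t ∩ {X | ∃ m : ℤ, X ∈ t.ge m}

/-- `T` is noetherian with witness `N` (relative to the t-structure `t`): every
`X ∈ T^-_c` admits a triangle `A ⟶ X ⟶ B` with `A ∈ T^-_c ∩ T^{≤0}` and
`B ∈ T^b_c ∩ T^{≥ −N}`. -/
def NoetherianWitness (t : TStruct T) (N : ℕ) : Prop :=
  ∀ X ∈ Tminus t, ∃ (A B : T) (f : A ⟶ X) (g : X ⟶ B) (h : B ⟶ A⟦(1 : ℤ)⟧),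
    A ∈ Tminus t ∩ t.le 0 ∧ B ∈ Tbc t ∩ t.ge (-(N : ℤ)) ∧
    Triangle.mk f g h ∈ (distTriang T)

/-- `T` is weakly approximable (relative to the t-structure `t`). -/
def WeaklyApproximable (t : TStruct T) : Prop :=
  ∃ (G : T) (A : ℕ), 0 < A ∧ IsCompactObject G ∧ IsGenerator G ∧
    G ∈ t.le (A : ℤ) ∧ (∀ X ∈ t.le (-(A : ℤ)), ∀ f : G ⟶ X, f = 0) ∧
    ∀ X ∈ t.le 0, ∃ (E D : T) (f : E ⟶ X) (g : X ⟶ D) (h : D ⟶ E⟦(1 : ℤ)⟧),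
      E ∈ aisleGen G (-(A : ℤ)) ∧ D ∈ t.le (-1) ∧
      Triangle.mk f g h ∈ (distTriang T)


section Helpers

variable (t : TStruct T)

lemma shift_mem_iff (S : ℤ → Set T)
    (hiso : ∀ n, ∀ X Y : T, (X ≅ Y) → X ∈ S n → Y ∈ S n)
    (hsh : ∀ (n : ℤ) (X : T), X ∈ S n ↔ X⟦(1 : ℤ)⟧ ∈ S (n - 1)) :
    ∀ (k n : ℤ) (X : T), X ∈ S n ↔ X⟦k⟧ ∈ S (n - k) := by
  have hiso' : ∀ n, ∀ X Y : T, (X ≅ Y) → (X ∈ S n ↔ Y ∈ S n) :=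
    fun n X Y e => ⟨hiso n X Y e, hiso n Y X e.symm⟩
  intro k
  induction k using Int.induction_on with
  | zero =>
    intro n X
    rw [hiso' n X (X⟦(0 : ℤ)⟧) ((shiftFunctorZero T ℤ).symm.app X)]
    norm_num
  | succ k ih =>
    intro n X
    rw [ih n X, hsh (n - (k : ℤ)) (X⟦(k : ℤ)⟧)]
    have h1 : n - (k : ℤ) - 1 = n - ((k : ℤ) + 1) := by ring
    rw [h1]
    exact hiso' _ _ _ (((shiftFunctorAdd' T (k : ℤ) 1 ((k : ℤ) + 1) rfl).app X).symm)
  | pred k ih =>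
    intro n X
    rw [ih n X]
    refine Iff.trans ?_ (hsh (n - (-(k : ℤ) - 1)) (X⟦(-(k : ℤ) - 1)⟧)).symm
    have h1 : n - -(k : ℤ) = n - (-(k : ℤ) - 1) - 1 := by ring
    rw [h1]
    exact hiso' _ _ _ ((shiftFunctorAdd' T (-(k : ℤ) - 1) 1 (-(k : ℤ)) (by ring)).app X)

lemma le_shift' (k n : ℤ) (X : T) : X ∈ t.le n ↔ X⟦k⟧ ∈ t.le (n - k) :=
  shift_mem_iff t.le t.le_iso t.le_shift k n X

lemma ge_shift' (k n : ℤ) (X : T) : X ∈ t.ge n ↔ X⟦k⟧ ∈ t.ge (n - k) :=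
  shift_mem_iff t.ge t.ge_iso t.ge_shift k n X

lemma ge_anti' {a b : ℤ} (h : a ≤ b) : t.ge b ⊆ t.ge a := by
  have key : ∀ (c : ℕ) (a : ℤ), t.ge (a + c) ⊆ t.ge a := by
    intro c
    induction c with
    | zero => intro a; simp
    | succ c ih =>
      intro a X hX
      refine t.ge_anti a (ih (a + 1) ?_)
      have : (a : ℤ) + (c + 1 : ℕ) = (a + 1) + c := by push_cast; ring
      rwa [this] at hX
  have hb : b = a + ((b - a).toNat : ℤ) := by omega
  rw [hb]
  exact key _ a

lemma hom_zero' {a b : ℤ} (h : a + 1 ≤ b) {X Y : T} (hX : X ∈ t.le a) (hY : Y ∈ t.ge b)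
    (f : X ⟶ Y) : f = 0 := by
  have hX' : X⟦a⟧ ∈ t.le 0 := by simpa using (le_shift' t a a X).1 hX
  have hY' : Y⟦a⟧ ∈ t.ge 1 := ge_anti' t (by omega) ((ge_shift' t a b Y).1 hY)
  have hz := t.hom_zero _ hX' _ hY' ((shiftFunctor T a).map f)
  apply (shiftFunctor T a).map_injective
  simpa using hz

lemma canMap_of {ι : Type v} [DecidableEq ι] (f : ι → T) (X : T) (i : ι) (h : X ⟶ f i) :
    canMap f X (DirectSum.of _ i h) = h ≫ Sigma.ι f i := by
  simp [canMap, DirectSum.toAddMonoid_of]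

lemma IsCompactObject.shift {X : T} (hX : IsCompactObject X) (k : ℤ) :
    IsCompactObject (X⟦k⟧) := by
  intro ι _ f
  classical
  set adj := (shiftEquiv T k).toAdjunction with hadj
  set g : ι → T := fun i => (f i)⟦(-k : ℤ)⟧ with hg
  set S : (∐ g) ⟶ (∐ f)⟦(-k : ℤ)⟧ := sigmaComparison (shiftFunctor T (-k)) f with hS
  haveI : IsIso S := by rw [hS]; infer_instance
  let e : ∀ i, (X⟦k⟧ ⟶ f i) →+ (X ⟶ g i) := fun i =>
    AddMonoidHom.mk' (fun h => adj.homEquiv X (f i) h)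
      (fun h₁ h₂ => by
        erw [Adjunction.homEquiv_unit, Adjunction.homEquiv_unit, Adjunction.homEquiv_unit]
        erw [(shiftFunctor T (-k)).map_add, Preadditive.comp_add]; rfl)
  let e' : ∀ i, (X ⟶ g i) →+ (X⟦k⟧ ⟶ f i) := fun i =>
    AddMonoidHom.mk' (fun h => (adj.homEquiv X (f i)).symm h)
      (fun h₁ h₂ => by
        erw [Adjunction.homEquiv_counit, Adjunction.homEquiv_counit, Adjunction.homEquiv_counit]
        erw [(shiftFunctor T k).map_add, Preadditive.add_comp]; rfl)
  let χ : (DirectSum ι fun i => (X⟦k⟧ ⟶ f i)) →+ (DirectSum ι fun i => (X ⟶ g i)) :=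
    DirectSum.toAddMonoid fun i => (DirectSum.of (fun i => (X ⟶ g i)) i).comp (e i)
  let χ' : (DirectSum ι fun i => (X ⟶ g i)) →+ (DirectSum ι fun i => (X⟦k⟧ ⟶ f i)) :=
    DirectSum.toAddMonoid fun i => (DirectSum.of (fun i => (X⟦k⟧ ⟶ f i)) i).comp (e' i)
  have hχ : Function.Bijective χ := by
    have h1 : χ'.comp χ = AddMonoidHom.id _ := by
      refine DirectSum.addHom_ext fun i y => ?_
      simp [χ, χ', e, e', DirectSum.toAddMonoid_of, AddMonoidHom.mk'_apply]
      exact congrArg _ ((adj.homEquiv X (f i)).symm_apply_apply y)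
    have h2 : χ.comp χ' = AddMonoidHom.id _ := by
      refine DirectSum.addHom_ext fun i y => ?_
      simp [χ, χ', e, e', DirectSum.toAddMonoid_of, AddMonoidHom.mk'_apply]
      exact congrArg _ ((adj.homEquiv X (f i)).apply_symm_apply y)
    exact Function.bijective_iff_has_inverse.2
      ⟨χ', fun x => DFunLike.congr_fun h1 x, fun x => DFunLike.congr_fun h2 x⟩
  let C : (X ⟶ ∐ g) →+ (X ⟶ (∐ f)⟦(-k : ℤ)⟧) :=
    AddMonoidHom.mk' (fun u => u ≫ S) (fun _ _ => Preadditive.add_comp _ _ _ _ _ _)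
  have hC : Function.Bijective C := by
    refine Function.bijective_iff_has_inverse.2 ⟨fun u => u ≫ inv S, fun u => ?_, fun u => ?_⟩
    · simp [C]
    · simp [C]
  let Φ : (X ⟶ (∐ f)⟦(-k : ℤ)⟧) →+ (X⟦k⟧ ⟶ ∐ f) :=
    AddMonoidHom.mk' (fun u => (adj.homEquiv X (∐ f)).symm u)
      (fun h₁ h₂ => by
        erw [Adjunction.homEquiv_counit, Adjunction.homEquiv_counit, Adjunction.homEquiv_counit]
        erw [(shiftFunctor T k).map_add, Preadditive.add_comp]; rfl)
  have hΦ : Function.Bijective Φ := (adj.homEquiv X (∐ f)).symm.bijective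
  have key : canMap f (X⟦k⟧) = Φ.comp (C.comp ((canMap g X).comp χ)) := by
    refine DirectSum.addHom_ext fun i y => ?_
    rw [canMap_of]
    simp only [AddMonoidHom.comp_apply]
    have hχof : χ (DirectSum.of _ i y) = DirectSum.of (fun i => (X ⟶ g i)) i (e i y) := by
      simp [χ, DirectSum.toAddMonoid_of]
    rw [hχof, canMap_of]
    symm
    show Φ ((e i y ≫ Sigma.ι g i) ≫ S) = y ≫ Sigma.ι f i
    rw [Category.assoc, hS, ι_comp_sigmaComparison (shiftFunctor T (-k)) f i]
    show (adj.homEquiv X (∐ f)).symm (adj.homEquiv X (f i) y ≫ (shiftFunctor T (-k)).map (Sigma.ι f i))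
      = y ≫ Sigma.ι f i
    rw [show (shiftFunctor T (-k)).map (Sigma.ι f i) = (shiftEquiv T k).inverse.map (Sigma.ι f i) from rfl,
      Adjunction.homEquiv_naturality_right_symm]
    exact congrArg (· ≫ Sigma.ι f i) ((adj.homEquiv X (f i)).symm_apply_apply y)
  rw [key]
  exact hΦ.comp (hC.comp ((hX g).comp hχ))

lemma Tminus.shift_mem {X : T} (hX : X ∈ Tminus t) (k : ℤ) : X⟦k⟧ ∈ Tminus t := by
  intro n
  obtain ⟨E, D, f, g, h, hE, hD, hTr⟩ := hX (n + k)
  let Tr' := (Triangle.shiftFunctor T k).obj (Triangle.mk f g h)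
  have hTr' : Tr' ∈ distTriang T := Pretriangulated.Triangle.shift_distinguished _ hTr k
  refine ⟨E⟦k⟧, D⟦k⟧, Tr'.mor₁, Tr'.mor₂, Tr'.mor₃, hE.shift k, ?_, ?_⟩
  · have := (le_shift' t k (n + k) D).1 hD
    simpa using this
  · exact hTr'

lemma Tbc.shift_mem {X : T} (hX : X ∈ Tbc t) (k : ℤ) : X⟦k⟧ ∈ Tbc t := by
  obtain ⟨h1, r, hr⟩ := hX
  exact ⟨Tminus.shift_mem t h1 k, r - k, (ge_shift' t k r X).1 hr⟩

end Helpers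

/-- in a noetherian triangulated category with a t-structure in the
preferred equivalence class (witness `N`), for every `H ∈ T^-_c` and `m ≥ 0` there is
`G ∈ T^b_c` with `H^⊥ ⊇ T^{≥ −m} ∩ G^⊥`. -/
theorem statement12 (t : TStruct T)
    (hsingle : ∃ (K : T) (n : ℤ), IsCompactObject K ∧ IsGenerator K ∧
      ∀ i : ℤ, n ≤ i → ∀ f : K ⟶ K⟦i⟧, f = 0)
    (hpref : InPreferredClass t)
    (N : ℕ) (hN : 0 < N) (hnoeth : NoetherianWitness t N)
    (H : T) (hH : H ∈ Tminus t) (m : ℕ) :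
    ∃ G ∈ Tbc t, ∀ X : T, X ∈ t.ge (-(m : ℤ)) →
      (∀ f : G ⟶ X, f = 0) → ∀ f : H ⟶ X, f = 0 := by
  classical
  set k : ℤ := (m : ℤ) + 1 with hk
  have hY : H⟦(-k : ℤ)⟧ ∈ Tminus t := Tminus.shift_mem t hH (-k)
  obtain ⟨A, B, f, g, h, hA, hB, hTr⟩ := hnoeth _ hY
  let Tr' := (Triangle.shiftFunctor T k).obj (Triangle.mk f g h)
  have hTr' : Tr' ∈ distTriang T := Pretriangulated.Triangle.shift_distinguished _ hTr k
  refine ⟨B⟦k⟧, Tbc.shift_mem t hB.1 k, ?_⟩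
  intro X hX hBX v
  -- iso (H⟦-k⟧)⟦k⟧ ≅ H
  let e : ((H⟦(-k : ℤ)⟧)⟦k⟧ : T) ≅ H := (shiftEquiv T k).counitIso.app H
  have hA' : (A⟦k⟧ : T) ∈ t.le (-k) := by
    have := (le_shift' t k 0 A).1 hA.2
    simpa using this
  have hzero : Tr'.mor₁ ≫ (e.hom ≫ v) = 0 := by
    exact hom_zero' t (a := -k) (b := -(m : ℤ)) (by omega) hA' hX _
  obtain ⟨w, hw⟩ := Pretriangulated.Triangle.yoneda_exact₂ Tr' hTr' (e.hom ≫ v) hzero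
  have hw0 : w = 0 := hBX w
  have : e.hom ≫ v = 0 := by rw [hw0, comp_zero] at hw; exact hw
  calc v = e.inv ≫ (e.hom ≫ v) := by rw [Iso.inv_hom_id_assoc]
  _ = 0 := by rw [this, comp_zero]

end Stmt12
end
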